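/- (Corollary: larger eigenvalues give smaller reconstruction error.) Let K = Σ_{i=1}^n d_i u_i u_iᵀ and K' = Σ_{i=1}^n d_i' u_i u_iᵀ be two symmetric positive semidefinite matrices with the same orthonormal eigenvectors u_1, …, u_n and eigenvalues satisfying 0 ≤ d_i ≤ d_i' for all i. Then for every y ∈ ℝⁿ and z > 0, the reconstruction error of K' is at most that of K: ‖y − K' (K' + zI)⁻¹ y‖² ≤ ‖y − K (K + zI)⁻¹ y‖². -/

import Mathlib

open Matrix

section Aux
variable {n : ℕ}

noncomputable def cjK (u : Fin n → (Fin n → ℝ)) (f : Fin n → ℝ) : Matrix (Fin n) (Fin n) ℝ :=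
  (Matrix.of u)ᵀ * (Matrix.diagonal f * Matrix.of u)

variable (u : Fin n → (Fin n → ℝ))
  (hu : ∀ i j, u i ⬝ᵥ u j = if i = j then (1 : ℝ) else 0)

include hu

lemma aux_UUt : (Matrix.of u) * (Matrix.of u)ᵀ = 1 := by
  ext i j
  simpa [Matrix.mul_apply, Matrix.one_apply, dotProduct] using hu i j

lemma aux_UtU : (Matrix.of u)ᵀ * (Matrix.of u) = 1 :=
  mul_eq_one_comm.mp (aux_UUt u hu)

lemma cjK_mul (f g : Fin n → ℝ) : cjK u f * cjK u g = cjK u (f * g) := by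
  simp only [cjK, Pi.mul_def]
  rw [show (Matrix.of u)ᵀ * (diagonal f * Matrix.of u) * ((Matrix.of u)ᵀ * (diagonal g * Matrix.of u))
      = (Matrix.of u)ᵀ * (diagonal f * ((Matrix.of u) * (Matrix.of u)ᵀ) * (diagonal g * Matrix.of u)) by
    noncomm_ring]
  rw [aux_UUt u hu, mul_one, ← diagonal_mul_diagonal,
    Matrix.mul_assoc (Matrix.diagonal f)]

lemma cjK_one : cjK u 1 = 1 := by
  have h1 : Matrix.diagonal (1 : Fin n → ℝ) = 1 := Matrix.diagonal_one
  rw [cjK, h1, Matrix.one_mul, aux_UtU u hu]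

omit hu in
lemma cjK_decomp (f : Fin n → ℝ) :
    ∑ i, f i • vecMulVec (u i) (u i) = cjK u f := by
  ext j k
  simp only [Finset.sum_apply, Matrix.sum_apply, Matrix.smul_apply, vecMulVec_apply, cjK,
    Matrix.mul_apply, Matrix.diagonal_apply, Matrix.transpose_apply, Matrix.of_apply,
    ite_mul, zero_mul, Finset.sum_ite_eq, Finset.mem_univ, if_true, smul_eq_mul]
  exact Finset.sum_congr rfl fun i _ => by ring

omit hu in
lemma cjK_add (f g : Fin n → ℝ) : cjK u f + cjK u g = cjK u (f + g) := by
  simp only [cjK]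
  rw [← Matrix.mul_add, ← Matrix.add_mul, diagonal_add]
  rfl

lemma cjK_smul_one (z : ℝ) : z • (1 : Matrix (Fin n) (Fin n) ℝ) = cjK u (fun _ => z) := by
  have h1 : (Matrix.diagonal (fun _ : Fin n => z)) = z • (1 : Matrix (Fin n) (Fin n) ℝ) := by
    simp [Matrix.smul_one_eq_diagonal]
  simp only [cjK, h1]
  rw [Matrix.smul_mul, Matrix.one_mul, Matrix.mul_smul, aux_UtU u hu]

lemma cjK_inv (f : Fin n → ℝ) (hf : ∀ i, f i ≠ 0) : (cjK u f)⁻¹ = cjK u f⁻¹ := by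
  apply Matrix.inv_eq_right_inv
  rw [cjK_mul u hu]
  have h1 : f * f⁻¹ = 1 := by
    funext i; simp [mul_inv_cancel₀ (hf i)]
  rw [h1, cjK_one u hu]

lemma cjK_dot (f : Fin n → ℝ) (y : Fin n → ℝ) :
    (cjK u f).mulVec y ⬝ᵥ (cjK u f).mulVec y
      = ∑ i, f i ^ 2 * ((Matrix.of u).mulVec y i) ^ 2 := by
  set c := (Matrix.of u).mulVec y with hc
  have hw : (cjK u f).mulVec y = (Matrix.of u)ᵀ.mulVec ((Matrix.diagonal f).mulVec c) := by
    simp [cjK, hc, Matrix.mulVec_mulVec, Matrix.mul_assoc]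
  rw [hw]
  set w := (Matrix.diagonal f).mulVec c with hwdef
  have h2 : (Matrix.of u)ᵀ.mulVec w ⬝ᵥ (Matrix.of u)ᵀ.mulVec w = w ⬝ᵥ w := by
    rw [Matrix.dotProduct_mulVec, Matrix.vecMul_transpose, Matrix.mulVec_mulVec, aux_UUt u hu,
      Matrix.one_mulVec]
  rw [h2, dotProduct]
  exact Finset.sum_congr rfl fun i _ => by
    simp [hwdef, Matrix.mulVec_diagonal]; ring

/-- Master error formula. -/
lemma cjK_err (f : Fin n → ℝ) (hf : ∀ i, 0 ≤ f i) (y : Fin n → ℝ) (z : ℝ) (hz : 0 < z) :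
    (y - (cjK u f * (cjK u f + z • (1 : Matrix (Fin n) (Fin n) ℝ))⁻¹).mulVec y) ⬝ᵥ
      (y - (cjK u f * (cjK u f + z • (1 : Matrix (Fin n) (Fin n) ℝ))⁻¹).mulVec y)
    = ∑ i, (z / (f i + z)) ^ 2 * ((Matrix.of u).mulVec y i) ^ 2 := by
  have hfz : ∀ i, f i + z ≠ 0 := fun i => by have := hf i; positivity
  have h1 : cjK u f + z • (1 : Matrix (Fin n) (Fin n) ℝ) = cjK u (fun i => f i + z) := by
    rw [cjK_smul_one u hu, cjK_add]; rfl
  have h2 : cjK u f * (cjK u f + z • (1 : Matrix (Fin n) (Fin n) ℝ))⁻¹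
      = cjK u (fun i => f i * (f i + z)⁻¹) := by
    rw [h1, cjK_inv u hu _ hfz, cjK_mul u hu]; rfl
  have hsub : (fun i => z / (f i + z)) = (1 : Fin n → ℝ) - fun i => f i * (f i + z)⁻¹ := by
    funext i
    have h := hfz i
    simp only [Pi.sub_apply, Pi.one_apply]
    field_simp
    ring
  have h3 : y - (cjK u (fun i => f i * (f i + z)⁻¹)).mulVec y
      = (cjK u (fun i => z / (f i + z))).mulVec y := by
    have he : (cjK u (fun i => z / (f i + z)))
        = 1 - cjK u (fun i => f i * (f i + z)⁻¹) := by
      rw [eq_sub_iff_add_eq, hsub, cjK_add, sub_add_cancel, cjK_one u hu]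
    rw [he, Matrix.sub_mulVec, Matrix.one_mulVec]
  rw [h2, h3, cjK_dot u hu]

end Aux

/-- Corollary, larger eigenvalues give smaller reconstruction error:
Let `K = ∑ i, d i • u i u iᵀ` and `K' = ∑ i, d' i • u i u iᵀ` be two symmetric positive
semidefinite matrices with the same orthonormal eigenvectors `u i` and eigenvalues satisfying
`0 ≤ d i ≤ d' i` for all `i`. Then for every `y` and `z > 0`, the reconstruction error of `K'`
is at most that of `K`: `‖y − K' (K' + zI)⁻¹ y‖² ≤ ‖y − K (K + zI)⁻¹ y‖²`, where the squared
Euclidean norm `‖v‖²` is written as `v ⬝ᵥ v`. -/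
theorem krr_larger_eigenvalues_smaller_reconstruction_error
    (n : ℕ) (hn : 0 < n)
    (K K' : Matrix (Fin n) (Fin n) ℝ)
    (d d' : Fin n → ℝ) (hdd' : ∀ i, 0 ≤ d i ∧ d i ≤ d' i)
    (u : Fin n → (Fin n → ℝ))
    (hu : ∀ i j, u i ⬝ᵥ u j = if i = j then (1 : ℝ) else 0)
    (hKdecomp : K = ∑ i, d i • vecMulVec (u i) (u i))
    (hK'decomp : K' = ∑ i, d' i • vecMulVec (u i) (u i))
    (y : Fin n → ℝ) (z : ℝ) (hz : 0 < z) :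
    (y - (K' * (K' + z • (1 : Matrix (Fin n) (Fin n) ℝ))⁻¹).mulVec y) ⬝ᵥ
        (y - (K' * (K' + z • (1 : Matrix (Fin n) (Fin n) ℝ))⁻¹).mulVec y)
      ≤ (y - (K * (K + z • (1 : Matrix (Fin n) (Fin n) ℝ))⁻¹).mulVec y) ⬝ᵥ
        (y - (K * (K + z • (1 : Matrix (Fin n) (Fin n) ℝ))⁻¹).mulVec y) := by
  have hKc : K = cjK u d := by rw [hKdecomp, cjK_decomp]
  have hK'c : K' = cjK u d' := by rw [hK'decomp, cjK_decomp]
  rw [hKc, hK'c, cjK_err u hu d (fun i => (hdd' i).1) y z hz,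
    cjK_err u hu d' (fun i => le_trans (hdd' i).1 (hdd' i).2) y z hz]
  apply Finset.sum_le_sum
  intro i _
  have h0 : 0 ≤ d i := (hdd' i).1
  have h1 : d i ≤ d' i := (hdd' i).2
  have hdz : 0 < d i + z := by linarith
  have hdz' : 0 < d' i + z := by linarith
  have hle : z / (d' i + z) ≤ z / (d i + z) := by gcongr
  have hnn : 0 ≤ z / (d' i + z) := by positivity
  exact mul_le_mul_of_nonneg_right (pow_le_pow_left₀ hnn hle 2) (sq_nonneg _)
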